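/- Let α₂, …, α_k be positive integers and β₂, …, β_k integers with gcd(α_i, β_i) = 1 for each i. Set α := lcm(α₂, …, α_k). Then gcd(α, β₂·α/α₂, …, β_k·α/α_k) = 1. -/

import Mathlib

lemma aux_lcm_factorization {ι : Type*} (s : Finset ι) (α : ι → ℕ)
    (h : ∀ i ∈ s, α i ≠ 0) {p : ℕ} (hp : p.Prime) (hd : p ∣ s.lcm α) :
    ∃ i ∈ s, (s.lcm α).factorization p ≤ (α i).factorization p := by
  classical
  induction s using Finset.induction_on with
  | empty => simp at hd; exact absurd hd hp.one_lt.ne'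
  | @insert a t ha ih =>
    rw [Finset.lcm_insert, lcm_eq_nat_lcm] at hd ⊢
    have h1 : α a ≠ 0 := h a (Finset.mem_insert_self a t)
    have h2 : t.lcm α ≠ 0 := by
      rw [Ne, Finset.lcm_eq_zero_iff]
      rintro ⟨i, hi, hi0⟩
      exact h i (Finset.mem_insert_of_mem hi) hi0
    have hfac := Nat.factorization_lcm h1 h2
    have hsup : (Nat.lcm (α a) (t.lcm α)).factorization p
        = max ((α a).factorization p) ((t.lcm α).factorization p) := by
      rw [show Nat.lcm (α a) (t.lcm α) = (α a).lcm (t.lcm α) from rfl, hfac]; rfl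
    rcases le_total ((t.lcm α).factorization p) ((α a).factorization p) with hle | hle
    · exact ⟨a, Finset.mem_insert_self a t, by rw [hsup]; omega⟩
    · have hpd : p ∣ t.lcm α := by
        have h1' : 1 ≤ (Nat.lcm (α a) (t.lcm α)).factorization p := by
          rw [← Nat.Prime.pow_dvd_iff_le_factorization hp (Nat.lcm_ne_zero h1 h2), pow_one]
          exact hd
        rw [← pow_one p, Nat.Prime.pow_dvd_iff_le_factorization hp h2]
        omega
      obtain ⟨i, hi, hle'⟩ := ih (fun i hi => h i (Finset.mem_insert_of_mem hi)) hpd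
      exact ⟨i, Finset.mem_insert_of_mem hi, by rw [hsup]; omega⟩

/-- If `gcd (α i) (β i) = 1` for all `i` in a finite index set, and `A = lcm of the α i`,
then `gcd (A, β i * (A / α i) for all i) = 1`. -/
theorem stmt_1 {ι : Type*} (s : Finset ι) (α : ι → ℕ) (β : ι → ℤ)
    (hα : ∀ i ∈ s, 0 < α i)
    (hcop : ∀ i ∈ s, Nat.gcd (α i) (β i).natAbs = 1) :
    gcd ((s.lcm α : ℕ) : ℤ) (s.gcd fun i => β i * ((s.lcm α / α i : ℕ) : ℤ)) = 1 := by
  classical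
  set A : ℕ := s.lcm α with hA
  set g : ℤ := s.gcd fun i => β i * ((A / α i : ℕ) : ℤ) with hg
  have hA0 : A ≠ 0 := by
    rw [hA, Ne, Finset.lcm_eq_zero_iff]
    rintro ⟨i, hi, hi0⟩
    exact (hα i hi).ne' hi0
  rw [← Int.coe_gcd]
  norm_cast
  by_contra hne
  obtain ⟨p, hp, hpd⟩ := Nat.exists_prime_and_dvd hne
  have hpAn : p ∣ A := by
    have h1 : Int.gcd (A : ℤ) g ∣ A := by
      rw [Int.gcd]; simpa using Nat.gcd_dvd_left (A : ℤ).natAbs g.natAbs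
    exact hpd.trans h1
  have hpg : (p : ℤ) ∣ g := dvd_trans (Int.natCast_dvd_natCast.mpr hpd) (Int.gcd_dvd_right _ _)
  obtain ⟨i, hi, hle⟩ := aux_lcm_factorization s α (fun i hi => (hα i hi).ne') hp hpAn
  rw [← hA] at hle
  have hAfac : 1 ≤ A.factorization p := by
    rw [← Nat.Prime.pow_dvd_iff_le_factorization hp hA0, pow_one]; exact hpAn
  have hpαi : p ∣ α i := by
    have := hle.trans' hAfac
    rw [← Nat.Prime.pow_dvd_iff_le_factorization hp (hα i hi).ne', pow_one] at this
    exact this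
  have hdvdlcm : α i ∣ A := Finset.dvd_lcm hi
  have hquot : A / α i * α i = A := Nat.div_mul_cancel hdvdlcm
  have hndvd : ¬ p ∣ A / α i := by
    intro hcon
    have h1 : p ^ (1 + (α i).factorization p) ∣ A := by
      rw [pow_add, pow_one, ← hquot]
      exact mul_dvd_mul hcon (Nat.ordProj_dvd _ _)
    rw [Nat.Prime.pow_dvd_iff_le_factorization hp hA0] at h1
    omega
  have hpgi : (p : ℤ) ∣ β i * ((A / α i : ℕ) : ℤ) := hpg.trans (Finset.gcd_dvd hi)
  have hpprime : Prime (p : ℤ) := Nat.prime_iff_prime_int.mp hp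
  rcases hpprime.dvd_mul.mp hpgi with hc | hc
  · have : p ∣ (β i).natAbs := by
      rwa [Int.natCast_dvd] at hc
    have : p ∣ Nat.gcd (α i) (β i).natAbs := Nat.dvd_gcd hpαi this
    rw [hcop i hi, Nat.dvd_one] at this
    exact hp.one_lt.ne' this
  · exact hndvd (Int.natCast_dvd_natCast.mp hc)
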